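/- Let u, v, w ∈ ℝ^N, φ_{abc} = u_a·v_b·w_c, D = λ_d + λ_p·N·(α₁+α₂+α₃) + λ_t·N^{3/2} with D ≠ 0, and assume |u|²·|v|²·|w|² = −λ₂·N³/D. Then the on-shell value of the potential is V(φ) = −λ₂²·N³/(4D); in particular V(φ) < 0 whenever λ₂ ≠ 0 and D > 0. -/

import Mathlib

open Finset

lemma sum3_eq (n : ℕ) (p q r : Fin n → ℝ) :
    ∑ a, ∑ b, ∑ c, p a * q b * r c
      = (∑ a, p a) * (∑ b, q b) * (∑ c, r c) := by
  rw [mul_assoc, Finset.sum_mul]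
  refine Finset.sum_congr rfl fun a _ => ?_
  rw [Finset.sum_mul, Finset.mul_sum]
  refine Finset.sum_congr rfl fun b _ => ?_
  simp only [Finset.mul_sum]
  exact Finset.sum_congr rfl fun c _ => by ring

lemma sum6_eq (n : ℕ) (p q r : Fin n → ℝ) :
    ∑ a : Fin n, ∑ b : Fin n, ∑ c : Fin n, ∑ a' : Fin n, ∑ b' : Fin n, ∑ c' : Fin n,
        p a * q b * r c * (p a' * q b' * r c')
      = ((∑ a, p a) * (∑ b, q b) * (∑ c, r c)) ^ 2 := by
  rw [sq, ← sum3_eq, Finset.sum_mul]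
  refine Finset.sum_congr rfl fun a _ => ?_
  rw [Finset.sum_mul]
  refine Finset.sum_congr rfl fun b _ => ?_
  rw [Finset.sum_mul]
  refine Finset.sum_congr rfl fun c _ => ?_
  rw [Finset.mul_sum]
  refine Finset.sum_congr rfl fun a' _ => ?_
  rw [Finset.mul_sum]
  refine Finset.sum_congr rfl fun b' _ => ?_
  simp only [Finset.mul_sum]

/-- The potential of the quartic `O(N)^3` tensor model. -/
noncomputable def potV (N : ℕ) (l2 ld lp lt a1 a2 a3 : ℝ)
    (φ : Fin N → Fin N → Fin N → ℝ) : ℝ :=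
  l2 / 2 * (∑ a, ∑ b, ∑ c, (φ a b c) ^ 2)
  + ld / (4 * (N : ℝ) ^ 3) * (∑ a, ∑ b, ∑ c, (φ a b c) ^ 2) ^ 2
  + lp / (4 * (N : ℝ) ^ 2) *
      (a1 * ∑ a, ∑ b, ∑ c, ∑ a', ∑ b', ∑ c',
          φ a b c * φ a b' c' * φ a' b' c' * φ a' b c
       + a2 * ∑ a, ∑ b, ∑ c, ∑ a', ∑ b', ∑ c',
          φ a b c * φ a' b c' * φ a' b' c' * φ a b' c
       + a3 * ∑ a, ∑ b, ∑ c, ∑ a', ∑ b', ∑ c',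
          φ a b c * φ a' b' c * φ a' b' c' * φ a b c')
  + lt / (4 * (N : ℝ) ^ ((3 : ℝ) / 2)) *
      ∑ a, ∑ b, ∑ c, ∑ a', ∑ b', ∑ c',
        φ a b c * φ a b' c' * φ a' b c' * φ a' b' c

/-- The field equations of the quartic `O(N)^3` tensor model (vanishing gradient of `potV`). -/
def FieldEqs (N : ℕ) (l2 ld lp lt a1 a2 a3 : ℝ)
    (φ : Fin N → Fin N → Fin N → ℝ) : Prop :=
  ∀ a b c,
    l2 * φ a b c
    + ld / (N : ℝ) ^ 3 * (∑ a', ∑ b', ∑ c', (φ a' b' c') ^ 2) * φ a b c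
    + lp / (N : ℝ) ^ 2 *
        (a1 * ∑ a', ∑ b', ∑ c', φ a b' c' * φ a' b' c' * φ a' b c
         + a2 * ∑ a', ∑ b', ∑ c', φ a' b c' * φ a' b' c' * φ a b' c
         + a3 * ∑ a', ∑ b', ∑ c', φ a' b' c * φ a' b' c' * φ a b c')
    + lt / (N : ℝ) ^ ((3 : ℝ) / 2) *
        ∑ a', ∑ b', ∑ c', φ a b' c' * φ a' b c' * φ a' b' c = 0

/-- The on-shell value of the potential at a rank-one solution is `-λ₂²N³/(4D)`;
in particular it is negative when `λ₂ ≠ 0` and `D > 0`. -/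
theorem rank_one_onshell_potential (N : ℕ) (hN : 1 ≤ N)
    (l2 ld lp lt a1 a2 a3 : ℝ)
    (u v w : Fin N → ℝ)
    (φ : Fin N → Fin N → Fin N → ℝ) (hφ : φ = fun a b c => u a * v b * w c)
    (D : ℝ)
    (hD : D = ld + lp * (N : ℝ) * (a1 + a2 + a3) + lt * (N : ℝ) ^ ((3 : ℝ) / 2))
    (hD0 : D ≠ 0)
    (hsol : (∑ a, (u a) ^ 2) * (∑ b, (v b) ^ 2) * (∑ c, (w c) ^ 2)
      = -l2 * (N : ℝ) ^ 3 / D) :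
    potV N l2 ld lp lt a1 a2 a3 φ = -l2 ^ 2 * (N : ℝ) ^ 3 / (4 * D)
    ∧ (l2 ≠ 0 → 0 < D → potV N l2 ld lp lt a1 a2 a3 φ < 0) := by
  subst hφ
  have hNr : (0 : ℝ) < (N : ℝ) := by exact_mod_cast hN
  set t : ℝ := (N : ℝ) ^ ((3 : ℝ) / 2) with hts
  have ht0 : 0 < t := Real.rpow_pos_of_pos hNr _
  have ht : t * t = (N : ℝ) ^ 3 := by
    rw [hts, ← Real.rpow_add hNr]
    norm_num
  have h2 : ∑ a, ∑ b, ∑ c, (u a * v b * w c) ^ 2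
      = (∑ a, (u a) ^ 2) * (∑ b, (v b) ^ 2) * (∑ c, (w c) ^ 2) := by
    rw [← sum3_eq]
    exact Finset.sum_congr rfl fun a _ => Finset.sum_congr rfl fun b _ =>
      Finset.sum_congr rfl fun c _ => by ring
  have key : ∀ F : Fin N → Fin N → Fin N → Fin N → Fin N → Fin N → ℝ,
      (∀ a b c a' b' c', F a b c a' b' c'
        = (u a)^2 * (v b)^2 * (w c)^2 * ((u a')^2 * (v b')^2 * (w c')^2)) →
      ∑ a, ∑ b, ∑ c, ∑ a', ∑ b', ∑ c', F a b c a' b' c'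
        = ((∑ a, (u a) ^ 2) * (∑ b, (v b) ^ 2) * (∑ c, (w c) ^ 2)) ^ 2 := by
    intro F hF
    rw [← sum6_eq]
    exact Finset.sum_congr rfl fun a _ => Finset.sum_congr rfl fun b _ =>
      Finset.sum_congr rfl fun c _ => Finset.sum_congr rfl fun a' _ =>
      Finset.sum_congr rfl fun b' _ => Finset.sum_congr rfl fun c' _ => hF a b c a' b' c'
  set P : ℝ := (∑ a, (u a) ^ 2) * (∑ b, (v b) ^ 2) * (∑ c, (w c) ^ 2) with hP
  have hval : potV N l2 ld lp lt a1 a2 a3 (fun a b c => u a * v b * w c)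
      = -l2 ^ 2 * (N : ℝ) ^ 3 / (4 * D) := by
    rw [potV]
    rw [h2, key _ (fun a b c a' b' c' => by ring),
        key _ (fun a b c a' b' c' => by ring),
        key _ (fun a b c a' b' c' => by ring),
        key _ (fun a b c a' b' c' => by ring), ← hts, hsol,
        show ld = D - lp * (N:ℝ) * (a1+a2+a3) - lt * t by rw [hD]; ring,
        show lt / (4 * t) = lt * t / (4 * (N:ℝ)^3) by
          rw [div_eq_div_iff (by positivity) (by positivity)]
          linear_combination (-4 : ℝ) * lt * ht]
    have hN0 : (N:ℝ) ≠ 0 := hNr.ne'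
    field_simp
    ring
  refine ⟨hval, fun hl2 hDpos => ?_⟩
  rw [hval]
  apply div_neg_of_neg_of_pos
  · have h1 : 0 < l2 ^ 2 := by positivity
    nlinarith [pow_pos hNr 3]
  · linarith
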